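/- Let t be real with 0 < |t| ≤ 1, and let w be a complex number with |w| ≥ 1/2 and |w| ≤ 1. Then sup_{y ∈ [1, e]} |1 + w·y^{-2it}| ≥ |t|/3. -/

import Mathlib

open Complex

lemma sin_ge_two_thirds {x : ℝ} (h0 : 0 < x) (h1 : x ≤ 1) : 2/3 * x ≤ Real.sin x := by
  have h := Real.sin_gt_sub_cube h0
  nlinarith [sq_nonneg x, sq_nonneg (x - 1)]

lemma abs_exp_mul_I_sub_one (a : ℝ) :
    ‖Complex.exp (↑a * I) - 1‖ = 2 * |Real.sin (a / 2)| := by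
  rw [Complex.exp_mul_I]
  have h : Complex.cos ↑a + Complex.sin ↑a * I - 1
      = ↑(Real.cos a - 1) + ↑(Real.sin a) * I := by push_cast; ring
  rw [h, Complex.norm_add_mul_I]
  have h2 : (Real.cos a - 1) ^ 2 + Real.sin a ^ 2 = (2 * |Real.sin (a / 2)|) ^ 2 := by
    have hs := Real.sin_sq_add_cos_sq a
    have hc : Real.cos (a / 2) ^ 2 = 1 / 2 + Real.cos a / 2 := by
      have := Real.cos_sq (a / 2)
      rw [show 2 * (a / 2) = a by ring] at this
      exact this
    have h2a := Real.sin_sq_add_cos_sq (a / 2)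
    have habs : |Real.sin (a / 2)| ^ 2 = Real.sin (a / 2) ^ 2 := _root_.sq_abs _
    nlinarith
  rw [h2, Real.sqrt_sq (by positivity)]

/-- Let `t` be real with `0 < |t| ≤ 1`, and `w` complex with `1/2 ≤ |w| ≤ 1`.
Then `sup_{y ∈ [1, e]} |1 + w·y^{-2it}| ≥ |t|/3`, where `y^{-2it} = exp(-2it log y)`. -/
theorem stmt_8 (t : ℝ) (ht0 : 0 < |t|) (ht1 : |t| ≤ 1) (w : ℂ)
    (hw1 : 1/2 ≤ ‖w‖) (hw2 : ‖w‖ ≤ 1) :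
    |t|/3 ≤ sSup ((fun y : ℝ =>
      ‖1 + w * Complex.exp (-(2 * t * Real.log y) * I)‖) ''
        Set.Icc 1 (Real.exp 1)) := by
  set f : ℝ → ℝ := fun y : ℝ =>
      ‖1 + w * Complex.exp (-(2 * t * Real.log y) * I)‖ with hf
  have hbdd : BddAbove (f '' Set.Icc 1 (Real.exp 1)) := by
    refine ⟨2, ?_⟩
    rintro z ⟨y, -, rfl⟩
    have hE : ‖Complex.exp (-(2 * ↑t * ↑(Real.log y)) * I)‖ = 1 := by
      have : (-(2 * (t : ℂ) * (Real.log y : ℂ)) : ℂ) = ((-(2 * t * Real.log y) : ℝ) : ℂ) := by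
        push_cast; ring
      rw [this, Complex.norm_exp_ofReal_mul_I]
    calc f y ≤ ‖(1:ℂ)‖ + ‖w * Complex.exp (-(2 * ↑t * ↑(Real.log y)) * I)‖ :=
          norm_add_le _ _
      _ ≤ 1 + 1 * 1 := by
          rw [norm_one, norm_mul, hE]
          gcongr
      _ ≤ 2 := by norm_num
  by_cases h : |t|/3 ≤ ‖1 + w‖
  · refine le_trans h (le_csSup hbdd ⟨1, Set.left_mem_Icc.2 (Real.one_le_exp one_pos.le), ?_⟩)
    simp [hf]
  · push_neg at h
    have he : f (Real.exp 1) = ‖1 + w * Complex.exp (↑(-(2 * t)) * I)‖ := by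
      rw [hf]
      norm_num [Real.log_exp]
    refine le_trans ?_ (le_csSup hbdd ⟨Real.exp 1,
      Set.right_mem_Icc.2 (Real.one_le_exp one_pos.le), rfl⟩)
    rw [he]
    set E := Complex.exp (↑(-(2 * t)) * I) with hEdef
    have hE1 : ‖E - 1‖ = 2 * |Real.sin t| := by
      rw [hEdef, abs_exp_mul_I_sub_one, show (-(2 * t) / 2 : ℝ) = -t by ring,
        Real.sin_neg, abs_neg]
    have hsin : |Real.sin t| = Real.sin |t| := by
      rcases abs_cases t with ⟨h1, h2⟩ | ⟨h1, h2⟩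
      · rw [h1, _root_.abs_of_nonneg (Real.sin_nonneg_of_nonneg_of_le_pi h2
          (by linarith [Real.pi_gt_three, h1 ▸ ht1]))]
      · rw [h1, Real.sin_neg, abs_of_nonpos]
        exact Real.sin_nonpos_of_nonpos_of_neg_pi_le (le_of_lt h2)
          (by linarith [Real.pi_gt_three, ht1, h1])
    have hlow : Real.sin |t| ≤ ‖w * E - w‖ := by
      have : w * E - w = w * (E - 1) := by ring
      rw [this, norm_mul, hE1, hsin]
      nlinarith [Real.sin_nonneg_of_nonneg_of_le_pi (abs_nonneg t)
        (by linarith [Real.pi_gt_three] : |t| ≤ Real.pi)]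
    have htri : ‖w * E - w‖ ≤ ‖1 + w * E‖ + ‖1 + w‖ := by
      have : w * E - w = (1 + w * E) - (1 + w) := by ring
      rw [this]
      simpa using norm_sub_le (1 + w * E) (1 + w)
    have hsge : 2/3 * |t| ≤ Real.sin |t| := sin_ge_two_thirds ht0 ht1
    linarith
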